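/- If T(f) and L(f) are fixed point systems and x is a periodic point of the monomial system f with all coordinates nonzero, then x is a fixed point of f. -/

import Mathlib

/-- The monomial dynamical system with exponent matrix `A`. -/
def monomialMap {K : Type*} [CommRing K] {n : ℕ} (A : Matrix (Fin n) (Fin n) ℕ)
    (x : Fin n → K) : Fin n → K := fun i => ∏ j, x j ^ A i j

/-- The exponent matrix of the Booleanization `T(f)`. -/
def boolMat {n : ℕ} (A : Matrix (Fin n) (Fin n) ℕ) : Matrix (Fin n) (Fin n) ℕ :=
  fun i j => if 0 < A i j then 1 else 0

/-- A fixed point system: every periodic point is a fixed point. -/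
def IsFixedPointSystem {X : Type*} (g : X → X) : Prop :=
  ∀ x, (∃ t, 0 < t ∧ g^[t] x = x) → g x = x

lemma monomial_on_powers {F : Type*} [Field F] {n : ℕ} (A : Matrix (Fin n) (Fin n) ℕ)
    (γ : F) (m : Fin n → ℕ) :
    monomialMap A (fun i => γ ^ m i) = fun i => γ ^ (A.mulVec m) i := by
  funext i
  simp only [monomialMap, Matrix.mulVec, dotProduct]
  rw [← Finset.prod_pow_eq_pow_sum]
  exact Finset.prod_congr rfl fun j _ => by rw [← pow_mul, mul_comm]

lemma monomial_iter_on_powers {F : Type*} [Field F] {n : ℕ} (A : Matrix (Fin n) (Fin n) ℕ)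
    (γ : F) (m : Fin n → ℕ) (t : ℕ) :
    (monomialMap A)^[t] (fun i => γ ^ m i) = fun i => γ ^ ((A ^ t).mulVec m) i := by
  induction t with
  | zero => simp [Matrix.mulVec_one]  -- might need fix
  | succ t ih =>
      rw [Function.iterate_succ_apply', ih, monomial_on_powers,
        Matrix.mulVec_mulVec, ← pow_succ']

lemma mulVec_iter {R : Type*} [CommSemiring R] {n : ℕ} (M : Matrix (Fin n) (Fin n) R)
    (s : Fin n → R) (t : ℕ) :
    (fun v => M.mulVec v)^[t] s = (M ^ t).mulVec s := by
  induction t with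
  | zero => simp [Matrix.one_mulVec]
  | succ t ih =>
      rw [Function.iterate_succ_apply', ih, Matrix.mulVec_mulVec, ← pow_succ']

theorem stmt6 {F : Type*} [Field F] [Fintype F] {n : ℕ}
    (A : Matrix (Fin n) (Fin n) ℕ)
    (hT : IsFixedPointSystem (monomialMap (K := ZMod 2) (boolMat A)))
    (hL : IsFixedPointSystem (fun s : Fin n → ZMod (Fintype.card F - 1) =>
      (A.map (Nat.cast : ℕ → ZMod (Fintype.card F - 1))).mulVec s))
    (x : Fin n → F) (hx : ∀ i, x i ≠ 0)
    (hper : ∃ t, 0 < t ∧ (monomialMap A)^[t] x = x) :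
    monomialMap A x = x := by
  classical
  set c := Fintype.card F - 1 with hc
  obtain ⟨g, hg⟩ := IsCyclic.exists_generator (α := Fˣ)
  have hord : orderOf g = c := by
    rw [orderOf_eq_card_of_forall_mem_zpowers hg, hc, Nat.card_eq_fintype_card,
      Fintype.card_units]
  -- powers of g in F
  have hpow : ∀ (a b : ℕ), ((g : F) ^ a = (g : F) ^ b) ↔ ((a : ZMod c) = (b : ZMod c)) := by
    intro a b
    rw [← Units.val_pow_eq_pow_val, ← Units.val_pow_eq_pow_val, Units.val_inj,
      pow_eq_pow_iff_modEq, hord, ← ZMod.natCast_eq_natCast_iff]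
  -- write x as powers of g
  have hxg : ∀ i, ∃ k : ℕ, x i = (g : F) ^ k := by
    intro i
    have hmem : Units.mk0 (x i) (hx i) ∈ Submonoid.powers g :=
      mem_powers_iff_mem_zpowers.2 (hg _)
    obtain ⟨k, hk⟩ := hmem
    refine ⟨k, ?_⟩
    have := congrArg Units.val hk
    simpa [Units.val_pow_eq_pow_val] using this.symm
  choose m hm using hxg
  have hxeq : x = fun i => (g : F) ^ m i := funext hm
  -- the exponent vector mod c
  set s : Fin n → ZMod c := fun j => (m j : ZMod c) with hs
  -- cast of mulVec
  have hcast : ∀ (B : Matrix (Fin n) (Fin n) ℕ) (i : Fin n),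
      (((B.mulVec m) i : ℕ) : ZMod c) = ((B.map (Nat.cast : ℕ → ZMod c)).mulVec s) i := by
    intro B i
    simp [Matrix.mulVec, dotProduct, Matrix.map_apply, hs]
  have hmappow : ∀ t : ℕ, (A ^ t).map (Nat.cast : ℕ → ZMod c) =
      (A.map (Nat.cast : ℕ → ZMod c)) ^ t := by
    intro t
    have := map_pow ((Nat.castRingHom (ZMod c)).mapMatrix) A t
    simpa [RingHom.mapMatrix_apply] using this
  obtain ⟨t, ht, hpt⟩ := hper
  -- s is periodic for L
  have hL' : (A.map (Nat.cast : ℕ → ZMod c)).mulVec s = s := by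
    apply hL s
    refine ⟨t, ht, ?_⟩
    rw [mulVec_iter, ← hmappow]
    funext i
    rw [← hcast]
    have := congrFun hpt i
    rw [hxeq, monomial_iter_on_powers] at this
    have h2 := (hpow _ _).1 this
    simpa [hs] using h2
  -- conclude
  funext i
  rw [hxeq, monomial_on_powers]
  apply (hpow _ _).2
  rw [hcast]
  simpa [hs] using congrFun hL' i
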